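/- arXiv:1302.3207 — 4 statements merged into one kernel-verified Lean document; each statement's English description precedes it below -/
import Mathlib

section
/- Let P, Q be orthogonal projections on a complex Hilbert space H with ‖P - Q‖ < 1. Set A := I + P(Q - P)P (which is positive and invertible) and T := Q A^{-1/2} P. Then T*T = P. -/
set_option maxHeartbeats 1000000 in
theorem stmt_5 (H : Type*) [NormedAddCommGroup H] [InnerProductSpace ℂ H] [CompleteSpace H]
    (P Q : H →L[ℂ] H)
    (hP : IsIdempotentElem P) (hP' : IsSelfAdjoint P)
    (hQ : IsIdempotentElem Q) (hQ' : IsSelfAdjoint Q)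
    (h : ‖P - Q‖ < 1) :
    star (Q * Ring.inverse (CFC.sqrt (1 + P * (Q - P) * P)) * P) *
      (Q * Ring.inverse (CFC.sqrt (1 + P * (Q - P) * P)) * P) = P := by
  set A : H →L[ℂ] H := 1 + P * (Q - P) * P with hA
  clear_value A
  have hPP : P * P = P := hP
  have hQQ : Q * Q = Q := hQ
  have hstep : P * (Q - P) * P = P * Q * P - P := by
    rw [mul_sub, hPP, sub_mul, hPP]
  -- A is nonnegative
  have h1P : (0 : H →L[ℂ] H) ≤ 1 - P := by
    have e : (1 - P : H →L[ℂ] H) = star (1 - P) * (1 - P) := by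
      rw [star_sub, star_one, hP'.star_eq]
      simp only [mul_sub, sub_mul, mul_one, one_mul, hPP]
      abel
    rw [e]; exact star_mul_self_nonneg _
  have hPQP : (0 : H →L[ℂ] H) ≤ P * Q * P := by
    have e : star (Q * P) * (Q * P) = P * Q * P := by
      rw [star_mul, hP'.star_eq, hQ'.star_eq, ← mul_assoc, mul_assoc P Q Q, hQQ]
    rw [← e]; exact star_mul_self_nonneg _
  have hA_eq : A = (1 - P) + P * Q * P := by rw [hA, hstep]; abel
  have hA_nonneg : (0 : H →L[ℂ] H) ≤ A := hA_eq ▸ add_nonneg h1P hPQP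
  have hA_sa : IsSelfAdjoint A := IsSelfAdjoint.of_nonneg hA_nonneg
  set S : H →L[ℂ] H := CFC.sqrt A with hSdef
  have hS2 : S * S = A := CFC.sqrt_mul_sqrt_self A hA_nonneg
  have hS_nonneg : (0 : H →L[ℂ] H) ≤ S := CFC.sqrt_nonneg A
  have hS_sa : IsSelfAdjoint S := IsSelfAdjoint.of_nonneg hS_nonneg
  -- A commutes with P
  have hAP : A * P = P * Q * P := by
    rw [hA, hstep, add_mul, one_mul, sub_mul, mul_assoc (P * Q) P P, hPP]
    abel
  have hPA : P * A = P * Q * P := by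
    rw [hA, hstep, mul_add, mul_one, mul_sub, hPP]
    rw [show P * (P * Q * P) = P * P * Q * P by simp only [mul_assoc], hPP]
    abel
  -- the symmetry U = 2P - 1
  set U : H →L[ℂ] H := P + P - 1 with hU
  have hU2 : U * U = 1 := by
    rw [hU]
    simp only [sub_mul, mul_sub, add_mul, mul_add, mul_one, one_mul, hPP]
    abel
  have hU_sa : IsSelfAdjoint U := by
    rw [hU]; exact (hP'.add hP').sub (IsSelfAdjoint.one _)
  have hUA : U * A = A * U := by
    rw [hU]
    simp only [sub_mul, mul_sub, add_mul, mul_add, one_mul, mul_one, hAP, hPA]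
  clear_value U
  -- U S U = S by uniqueness of sqrt
  have hUSU_nonneg : (0 : H →L[ℂ] H) ≤ U * S * U := by
    have := star_left_conjugate_nonneg hS_nonneg U
    rwa [hU_sa.star_eq] at this
  have hUSU_sq : (U * S * U) * (U * S * U) = A := by
    calc (U * S * U) * (U * S * U) = U * S * (U * U) * S * U := by
          simp only [mul_assoc]
    _ = U * (S * S) * U := by rw [hU2, mul_one]; simp only [mul_assoc]
    _ = A * (U * U) := by rw [hS2, ← mul_assoc, hUA, mul_assoc]
    _ = A := by rw [hU2, mul_one]
  have hUSU : S = U * S * U := by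
    rw [hSdef]
    exact CFC.sqrt_unique hUSU_sq hUSU_nonneg
  clear_value S
  have hUS : U * S = S * U := by
    have h1 : S * U = U * S * U * U := congrArg (· * U) hUSU
    rw [mul_assoc (U * S) U U, hU2, mul_one] at h1
    exact h1.symm
  have hPS : P * S = S * P := by
    have h2 : P * S + P * S - S = S * P + S * P - S := by
      have := hUS
      rw [hU, sub_mul, mul_sub, add_mul, mul_add, one_mul, mul_one] at this
      exact this
    have h2' : (2 : ℂ) • (P * S) = (2 : ℂ) • (S * P) := by
      rw [two_smul, two_smul]
      have := congrArg (· + S) h2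
      simpa using this
    exact smul_right_injective (H →L[ℂ] H) two_ne_zero h2'
  -- A is a unit
  have hPnorm : ‖P‖ ≤ 1 := by
    have h1 : ‖P‖ * ‖P‖ = ‖P‖ := by
      rw [← CStarRing.norm_star_mul_self, hP'.star_eq, hPP]
    nlinarith [norm_nonneg P]
  have hXnorm : ‖P * (P - Q) * P‖ < 1 := by
    have h1 := norm_mul_le (P * (P - Q)) P
    have h2 := norm_mul_le P (P - Q)
    nlinarith [norm_nonneg (P - Q), norm_nonneg P, norm_nonneg (P * (P - Q))]
  have hA_unit : IsUnit A := by
    have e : A = 1 - P * (P - Q) * P := by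
      rw [hA, show P * (P - Q) * P = P - P * Q * P by
        rw [mul_sub, hPP, sub_mul, hPP], hstep]
      abel
    rw [e]
    exact isUnit_one_sub_of_norm_lt_one hXnorm
  -- S is a unit
  obtain ⟨u, hu⟩ := hA_unit
  have hSA : Commute S A := by
    rw [← hS2]; exact (Commute.refl S).mul_right (Commute.refl S)
  have hSu : Commute S (↑u⁻¹ : H →L[ℂ] H) :=
    Commute.units_inv_right (hu ▸ hSA)
  have hS_unit : IsUnit S := by
    refine isUnit_iff_exists.mpr ⟨S * ↑u⁻¹, ?_, ?_⟩
    · rw [← mul_assoc, hS2, ← hu, u.mul_inv]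
    · rw [mul_assoc, ← hSu.eq, ← mul_assoc, hS2, ← hu, u.mul_inv]
  obtain ⟨v, hv⟩ := hS_unit
  set B : H →L[ℂ] H := Ring.inverse S with hB
  have hBv : B = (↑v⁻¹ : H →L[ℂ] H) := by rw [hB, ← hv, Ring.inverse_unit]
  clear_value B
  have hBS : B * S = 1 := by rw [hBv, ← hv]; exact v.inv_mul
  have hSB : S * B = 1 := by rw [hBv, ← hv]; exact v.mul_inv
  have hB_sa : IsSelfAdjoint B := by
    have h1 : star B * S = 1 := by
      have := congrArg star hSB
      rwa [star_mul, hS_sa.star_eq, star_one] at this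
    calc star B = star B * (S * B) := by rw [hSB, mul_one]
    _ = (star B * S) * B := by rw [mul_assoc]
    _ = B := by rw [h1, one_mul]
  have hPB : P * B = B * P := by
    have hc : Commute P (↑v⁻¹ : H →L[ℂ] H) :=
      Commute.units_inv_right (hv ▸ (hPS : Commute P S))
    rw [hBv]; exact hc.eq
  -- final computation
  rw [star_mul, star_mul, hP'.star_eq, hQ'.star_eq, hB_sa.star_eq]
  show P * (B * Q) * (Q * B * P) = P
  simp only [mul_assoc]
  rw [← mul_assoc Q Q, hQQ]
  rw [← mul_assoc P B, hPB, mul_assoc B P]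
  rw [← hPB, ← mul_assoc Q P B, ← mul_assoc P (Q * P) B, ← mul_assoc P Q P]
  rw [← hAP, mul_assoc A P B, hPB, ← mul_assoc A B P, ← mul_assoc B (A * B) P]
  rw [← hS2, mul_assoc S S B, hSB, mul_one, hBS, one_mul]
end

section
/- Let P, Q be orthogonal projections on a complex Hilbert space H with ‖P - Q‖ < 1, A := I + P(Q - P)P, and T := Q A^{-1/2} P. Then T is a partial isometry, i.e., T T* T = T. -/
set_option maxHeartbeats 1000000

theorem stmt_6 (H : Type*) [NormedAddCommGroup H] [InnerProductSpace ℂ H] [CompleteSpace H]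
    (P Q : H →L[ℂ] H)
    (hP : IsIdempotentElem P) (hP' : IsSelfAdjoint P)
    (hQ : IsIdempotentElem Q) (hQ' : IsSelfAdjoint Q)
    (h : ‖P - Q‖ < 1) :
    (Q * Ring.inverse (CFC.sqrt (1 + P * (Q - P) * P)) * P) *
      star (Q * Ring.inverse (CFC.sqrt (1 + P * (Q - P) * P)) * P) *
        (Q * Ring.inverse (CFC.sqrt (1 + P * (Q - P) * P)) * P) =
      Q * Ring.inverse (CFC.sqrt (1 + P * (Q - P) * P)) * P := by
  have hPP : P * P = P := hP
  have hQQ : Q * Q = Q := hQ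
  set A : H →L[ℂ] H := 1 + P * (Q - P) * P with hA_def
  -- rewrite the perturbation
  have hB : P * (Q - P) * P = P * Q * P - P := by
    rw [mul_sub, hPP, sub_mul, hPP]
  -- A is nonnegative
  have h1P : (0 : H →L[ℂ] H) ≤ 1 - P := by
    have e : (1 - P : H →L[ℂ] H) = star (1 - P) * (1 - P) := by
      rw [star_sub, star_one, hP'.star_eq, mul_sub, mul_one, sub_mul, one_mul, hPP]
      abel
    rw [e]; exact star_mul_self_nonneg _
  have hPQP : (0 : H →L[ℂ] H) ≤ P * Q * P := by
    have e : P * Q * P = star (Q * P) * (Q * P) := by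
      rw [star_mul, hP'.star_eq, hQ'.star_eq, ← mul_assoc, mul_assoc P Q Q, hQQ]
    rw [e]; exact star_mul_self_nonneg _
  have hA_nonneg : (0 : H →L[ℂ] H) ≤ A := by
    have e : A = (1 - P) + P * Q * P := by rw [hA_def, hB]; abel
    rw [e]; exact add_nonneg h1P hPQP
  -- A is a unit
  have hPnorm : ‖P‖ ≤ 1 := by
    have e : ‖P‖ * ‖P‖ = ‖P‖ := by
      rw [← CStarRing.norm_star_mul_self (x := P), hP'.star_eq, hPP]
    nlinarith [norm_nonneg P]
  have hBnorm : ‖P * (Q - P) * P‖ < 1 := by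
    calc ‖P * (Q - P) * P‖ ≤ ‖P * (Q - P)‖ * ‖P‖ := norm_mul_le _ _
      _ ≤ ‖P‖ * ‖Q - P‖ * ‖P‖ := by
          gcongr
          exact norm_mul_le _ _
      _ < 1 := by
          have hq : ‖Q - P‖ < 1 := by rwa [norm_sub_rev] at h
          have h1 : ‖P‖ * ‖Q - P‖ ≤ ‖Q - P‖ :=
            mul_le_of_le_one_left (norm_nonneg _) hPnorm
          have h2 : ‖P‖ * ‖Q - P‖ * ‖P‖ ≤ ‖P‖ * ‖Q - P‖ :=
            mul_le_of_le_one_right (by positivity) hPnorm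
          linarith
  have hAunit : IsUnit A := by
    have h' : ‖-(P * (Q - P) * P)‖ < 1 := by rwa [norm_neg]
    have := (Units.oneSub _ h').isUnit
    rwa [Units.val_oneSub, sub_neg_eq_add, ← hA_def] at this
  -- the square root
  set S : H →L[ℂ] H := CFC.sqrt A with hS_def
  have hS : S * S = A := CFC.sqrt_mul_sqrt_self A hA_nonneg
  have hSnn : (0 : H →L[ℂ] H) ≤ S := CFC.sqrt_nonneg A
  have hSsa : IsSelfAdjoint S := IsSelfAdjoint.of_nonneg hSnn
  -- P commutes with A
  have c1 : Commute P (P * Q * P) := by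
    show P * (P * Q * P) = P * Q * P * P
    rw [← mul_assoc, ← mul_assoc, hPP, mul_assoc (P * Q), hPP]
  have hCA : Commute P A := by
    rw [hA_def, hB]
    exact (Commute.one_right P).add_right (c1.sub_right (Commute.refl P))
  -- conjugation by the selfadjoint unitary U = 1 - 2P fixes A, hence fixes S
  set U : H →L[ℂ] H := 1 - P - P with hU_def
  have hUsa : IsSelfAdjoint U := by
    rw [hU_def]; exact ((IsSelfAdjoint.one _).sub hP').sub hP'
  have hUU : U * U = 1 := by
    rw [hU_def]
    simp only [sub_mul, mul_sub, one_mul, mul_one, hPP]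
    abel
  have hCU : Commute U A := by
    rw [hU_def]
    exact ((Commute.one_left A).sub_left hCA).sub_left hCA
  have hUAU : U * A * U = A := by
    rw [hCU.eq, mul_assoc, hUU, mul_one]
  have hUSU_nonneg : (0 : H →L[ℂ] H) ≤ U * S * U := by
    have := star_left_conjugate_nonneg hSnn U
    rwa [hUsa.star_eq] at this
  have hUSU_sq : (U * S * U) * (U * S * U) = A := by
    have e : (U * S * U) * (U * S * U) = U * (S * (U * U) * S) * U := by noncomm_ring
    rw [e, hUU, mul_one, hS, hUAU]
  have h3 : S = U * S * U := by
    rw [hS_def]; exact CFC.sqrt_unique hUSU_sq hUSU_nonneg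
  have hSU : S * U = U * S := by
    conv_lhs => rw [h3]
    rw [mul_assoc (U * S), hUU, mul_one]
  -- hence S commutes with P
  have hSP : S * P = P * S := by
    have h5 : S - S * P - S * P = S - P * S - P * S := by
      have := hSU
      rw [hU_def] at this
      simpa only [mul_sub, sub_mul, mul_one, one_mul] using this
    have h6 : S - (S * P + S * P) = S - (P * S + P * S) := by
      rw [← sub_sub, ← sub_sub]; exact h5
    have h7 : S * P + S * P = P * S + P * S := (sub_right_inj).mp h6
    have h8 : (2 : ℂ) • (S * P) = (2 : ℂ) • (P * S) := by
      rw [two_smul, two_smul]; exact h7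
    exact smul_right_injective (H →L[ℂ] H) (two_ne_zero) h8
  -- S is a unit
  have hSA : Commute S A := by
    have := (Commute.refl S).mul_right (Commute.refl S)
    rwa [hS] at this
  have hSu : Commute S ((hAunit.unit⁻¹ : (H →L[ℂ] H)ˣ) : H →L[ℂ] H) := by
    refine Commute.units_inv_right ?_
    rwa [IsUnit.unit_spec]
  have hSunit : IsUnit S := by
    refine ⟨⟨S, (↑hAunit.unit⁻¹ : H →L[ℂ] H) * S, ?_, ?_⟩, rfl⟩
    · rw [← mul_assoc, hSu.eq, mul_assoc, hS]
      exact hAunit.val_inv_mul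
    · rw [mul_assoc, hS]
      exact hAunit.val_inv_mul
  set R : H →L[ℂ] H := Ring.inverse S with hR_def
  have hRS : R * S = 1 := Ring.inverse_mul_cancel S hSunit
  have hSR : S * R = 1 := Ring.mul_inverse_cancel S hSunit
  have hRP : R * P = P * R := by
    calc R * P = R * P * (S * R) := by rw [hSR, mul_one]
      _ = R * (P * S) * R := by noncomm_ring
      _ = R * (S * P) * R := by rw [hSP]
      _ = (R * S) * (P * R) := by noncomm_ring
      _ = P * R := by rw [hRS, one_mul]
  have hRsa : star R = R := by
    have h1 : star R * S = 1 := by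
      have := congrArg star hSR
      rwa [star_mul, star_one, hSsa.star_eq] at this
    calc star R = star R * (S * R) := by rw [hSR, mul_one]
      _ = (star R * S) * R := by rw [mul_assoc]
      _ = R := by rw [h1, one_mul]
  -- key identity : P * R * Q * R * P = P
  have hAB : A * (R * R) = 1 := by
    rw [← hS]
    calc S * S * (R * R) = S * (S * R) * R := by noncomm_ring
      _ = 1 := by rw [hSR, mul_one, hSR]
  have h1PA : (1 - P) * A = 1 - P := by
    have e : (1 - P) * A =
        1 + P * Q * P - P - P - (P * (P * Q * P) - P * P) := by
      rw [hA_def, hB]; noncomm_ring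
    rw [e, ← mul_assoc, ← mul_assoc, hPP]
    abel
  have h1PB : (1 - P) * (R * R) = 1 - P := by
    calc (1 - P) * (R * R) = ((1 - P) * A) * (R * R) := by rw [h1PA]
      _ = (1 - P) * (A * (R * R)) := by rw [mul_assoc]
      _ = 1 - P := by rw [hAB, mul_one]
  have hRAR : R * A * R = 1 := by
    rw [← hS]
    calc R * (S * S) * R = (R * S) * (S * R) := by noncomm_ring
      _ = 1 := by rw [hRS, hSR, mul_one]
  have hKey : P * R * Q * R * P = P := by
    have e1 : P * R * Q * R * P = R * (P * Q * P) * R := by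
      calc P * R * Q * R * P = (P * R) * Q * (R * P) := by noncomm_ring
        _ = (R * P) * Q * (P * R) := by rw [hRP]
        _ = R * (P * Q * P) * R := by noncomm_ring
    have e2 : P * Q * P = A - 1 + P := by rw [hA_def, hB]; abel
    have e3 : R * (A - 1 + P) * R = R * A * R - R * R + P * (R * R) := by
      have : R * (A - 1 + P) * R = R * A * R - R * R + (R * P) * R := by noncomm_ring
      rw [this, hRP, mul_assoc P R R]
    have e4 : (1 : H →L[ℂ] H) - R * R + P * (R * R) = P := by
      have e5 : (1 : H →L[ℂ] H) - R * R + P * (R * R) = 1 - (1 - P) * (R * R) := by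
        noncomm_ring
      rw [e5, h1PB]; abel
    rw [e1, e2, e3, hRAR, e4]
  -- finish
  have hstar : star (Q * R * P) = P * (R * Q) := by
    rw [star_mul, star_mul, hP'.star_eq, hQ'.star_eq, hRsa]
  rw [hstar]
  calc Q * R * P * (P * (R * Q)) * (Q * R * P)
      = Q * R * ((P * P) * R * (Q * Q) * R * P) := by noncomm_ring
    _ = Q * R * (P * R * Q * R * P) := by rw [hPP, hQQ]
    _ = Q * R * P := by rw [hKey]
end

section
/- Let p, q be projections in a unital C*-algebra A with ‖p - q‖ < 1. Then there exists a partial isometry t ∈ A (t t* t = t) such that t*t = p and t t* = q. -/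
open scoped Polynomial

/-- Anything commuting with a selfadjoint element commutes with its real cfc. -/
lemma commute_cfc_aux {A : Type*} [CStarAlgebra A] {a b : A} (hb : Commute b a)
    (f : ℝ → ℝ) : Commute b (cfc f a) := by
  refine cfc_cases (fun x => Commute b x) a f (Commute.zero_right b) fun hf ha => ?_
  suffices H : ∀ g : C(spectrum ℝ a, ℝ), Commute b (cfcHom ha g) from H _
  intro g
  induction g using ContinuousMap.induction_on with
  | const r =>
    have : (ContinuousMap.const (spectrum ℝ a) r) = algebraMap ℝ C(spectrum ℝ a, ℝ) r := rfl
    rw [this, AlgHomClass.commutes, Algebra.algebraMap_eq_smul_one]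
    exact (Commute.one_right b).smul_right r
  | id => rw [cfcHom_id ha]; exact hb
  | star_id =>
    have : star ((ContinuousMap.id ℝ).restrict (spectrum ℝ a))
        = (ContinuousMap.id ℝ).restrict (spectrum ℝ a) := by
      ext x; simp [star_trivial]
    rw [this, cfcHom_id ha]; exact hb
  | add f g hf hg => rw [map_add]; exact hf.add_right hg
  | mul f g hf hg => rw [map_mul]; exact hf.mul_right hg
  | closure h g =>
    have hS : IsClosed {g : C(spectrum ℝ a, ℝ) | Commute b (cfcHom ha g)} := by
      have hc : Continuous (cfcHom ha (R := ℝ)) := (cfcHom_isClosedEmbedding ha).continuous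
      exact isClosed_eq ((continuous_mul_left b).comp hc) ((continuous_mul_right b).comp hc)
    have hdense : g ∈ closure ((polynomialFunctions (spectrum ℝ a)).starClosure :
        Set C(spectrum ℝ a, ℝ)) := by
      have := polynomialFunctions.starClosure_topologicalClosure (spectrum ℝ a)
      have : g ∈ (polynomialFunctions (spectrum ℝ a)).starClosure.topologicalClosure := by
        rw [this]; trivial
      exact this
    exact hS.closure_subset_iff.mpr (fun f hf => h f hf) hdense

theorem stmt_12 (A : Type*) [CStarAlgebra A] (p q : A)
    (hp : IsIdempotentElem p) (hp' : IsSelfAdjoint p)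
    (hq : IsIdempotentElem q) (hq' : IsSelfAdjoint q)
    (h : ‖p - q‖ < 1) :
    ∃ t : A, t * star t * t = t ∧ star t * t = p ∧ t * star t = q := by
  rcases subsingleton_or_nontrivial A with hA | hA
  · exact ⟨0, Subsingleton.elim _ _, Subsingleton.elim _ _, Subsingleton.elim _ _⟩
  have hp2 : ∀ z : A, p * (p * z) = p * z := fun z => by rw [← mul_assoc, hp.eq]
  have hq2 : ∀ z : A, q * (q * z) = q * z := fun z => by rw [← mul_assoc, hq.eq]
  set d : A := (p - q) * (p - q) with hd_def
  set e : A := 1 - d with he_def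
  set x : A := q * p + (1 - q) * (1 - p) with hx_def
  have hd_norm : ‖d‖ < 1 := by
    calc ‖d‖ ≤ ‖p - q‖ * ‖p - q‖ := norm_mul_le _ _
      _ < 1 := by nlinarith [norm_nonneg (p - q)]
  have he_sa : IsSelfAdjoint e := by
    rw [he_def, hd_def]
    simp [IsSelfAdjoint, star_sub, star_mul, hp'.star_eq, hq'.star_eq]
  have hxstar : star x = p * q + (1 - p) * (1 - q) := by
    rw [hx_def]
    simp [star_mul, hp'.star_eq, hq'.star_eq]
  have hxx' : star x * x = e := by
    rw [hxstar, hx_def, he_def, hd_def]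
    simp only [mul_sub, sub_mul, mul_add, add_mul, mul_one, one_mul, mul_assoc,
      hp.eq, hq.eq, hp2, hq2]
    abel
  have hxx : x * star x = e := by
    rw [hxstar, hx_def, he_def, hd_def]
    simp only [mul_sub, sub_mul, mul_add, add_mul, mul_one, one_mul, mul_assoc,
      hp.eq, hq.eq, hp2, hq2]
    abel
  have hxp : x * p = q * x := by
    rw [hx_def]
    simp only [mul_sub, sub_mul, mul_add, add_mul, mul_one, one_mul, mul_assoc,
      hp.eq, hq.eq, hp2, hq2]
    abel
  have hpe : Commute p e := by
    show p * e = e * p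
    rw [he_def, hd_def]
    simp only [mul_sub, sub_mul, mul_add, add_mul, mul_one, one_mul, mul_assoc,
      hp.eq, hq.eq, hp2, hq2]
    abel
  have hxe : Commute x e := by
    show x * e = e * x
    rw [← hxx', ← mul_assoc, hxx, hxx']
  have hspec : ∀ r ∈ spectrum ℝ e, (0:ℝ) < r := by
    intro r hr
    have h1 : (1:ℝ) - r ∈ spectrum ℝ d := by
      have hde : d = algebraMap ℝ A 1 - e := by
        rw [he_def]; simp
      rw [hde, ← spectrum.singleton_sub_eq]
      exact Set.sub_mem_sub rfl hr
    have h2 := spectrum.norm_le_norm_of_mem h1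
    rw [Real.norm_eq_abs] at h2
    have h3 := abs_le.mp h2
    linarith [h3.2]
  set f : ℝ → ℝ := fun r => (Real.sqrt r)⁻¹ with hf_def
  have hf_cont : ContinuousOn f (spectrum ℝ e) := by
    refine ContinuousOn.inv₀ Real.continuous_sqrt.continuousOn fun r hr => ?_
    exact ne_of_gt (Real.sqrt_pos.mpr (hspec r hr))
  set s : A := cfc f e with hs_def
  have hs_sa : IsSelfAdjoint s := cfc_predicate f e
  have hps : Commute p s := commute_cfc_aux hpe f
  have hxs : Commute x s := commute_cfc_aux hxe f
  have hes : Commute e s := commute_cfc_aux (Commute.refl e) f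
  have hsse : s * s * e = 1 := by
    rw [hs_def]
    nth_rewrite 3 [← cfc_id ℝ e]
    rw [← cfc_mul f f e hf_cont hf_cont,
      ← cfc_mul (fun x => f x * f x) id e (hf_cont.mul hf_cont) continuousOn_id,
      ← cfc_one (R := ℝ) e]
    apply cfc_congr
    intro r hr
    have h0 : (0:ℝ) < r := hspec r hr
    have hs0 : Real.sqrt r ≠ 0 := ne_of_gt (Real.sqrt_pos.mpr h0)
    simp only [hf_def, id_eq, Pi.one_apply]
    rw [← mul_inv, Real.mul_self_sqrt h0.le]
    exact inv_mul_cancel₀ (ne_of_gt h0)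
  have hsx' : Commute s (star x) := by
    have := congrArg star hxs.eq
    simp only [star_mul, hs_sa.star_eq] at this
    exact this
  have key : x * (s * s) * star x = 1 := by
    calc x * (s * s) * star x = x * s * (s * star x) := by noncomm_ring
      _ = x * s * (star x * s) := by rw [hsx'.eq]
      _ = x * (s * star x) * s := by noncomm_ring
      _ = x * (star x * s) * s := by rw [hsx'.eq]
      _ = (x * star x) * (s * s) := by noncomm_ring
      _ = e * (s * s) := by rw [hxx]
      _ = s * s * e := (hes.mul_right hes).eq
      _ = 1 := hsse
  have hts : star (x * s * p) = p * s * star x := by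
    simp [star_mul, hp'.star_eq, hs_sa.star_eq, mul_assoc]
  have hb : p * s * star x * (x * s * p) = p := by
    calc p * s * star x * (x * s * p) = p * (s * (star x * x) * s) * p := by noncomm_ring
      _ = p * (s * e * s) * p := by rw [hxx']
      _ = p * (s * (s * e)) * p := by rw [mul_assoc s e s, hes.eq]
      _ = p * (s * s * e) * p := by rw [← mul_assoc s s e]
      _ = p * p := by rw [hsse, mul_one]
      _ = p := hp.eq
  have hc : x * s * p * (p * s * star x) = q := by
    calc x * s * p * (p * s * star x) = x * (s * (p * p) * s) * star x := by noncomm_ring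
      _ = x * (s * p * s) * star x := by rw [hp.eq]
      _ = x * (p * s * s) * star x := by rw [← hps.eq]
      _ = (x * p) * (s * s) * star x := by noncomm_ring
      _ = (q * x) * (s * s) * star x := by rw [hxp]
      _ = q * (x * (s * s) * star x) := by noncomm_ring
      _ = q := by rw [key, mul_one]
  refine ⟨x * s * p, ?_, ?_, ?_⟩
  · rw [hts, hc]
    calc q * (x * s * p) = (q * x) * (s * p) := by noncomm_ring
      _ = (x * p) * (s * p) := by rw [← hxp]
      _ = x * (p * s) * p := by noncomm_ring
      _ = x * (s * p) * p := by rw [hps.eq]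
      _ = x * s * (p * p) := by noncomm_ring
      _ = x * s * p := by rw [hp.eq]
  · rw [hts, hb]
  · rw [hts, hc]
end

section
/- Let P and Q be orthogonal projections on a complex Hilbert space with ‖P - Q‖ < 1. Then dim(range P) = dim(range Q) (the ranges are isometrically isomorphic). -/
open Polynomial in
lemma commute_aeval' {A : Type*} [Ring A] [Algebra ℝ A] {a b : A}
    (hab : Commute b a) (p : ℝ[X]) : Commute b (Polynomial.aeval a p) := by
  induction p using Polynomial.induction_on' with
  | add p q hp hq => simpa using hp.add_right hq
  | monomial n c =>
      rw [Polynomial.aeval_monomial]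
      exact (Algebra.commute_algebraMap_right c b).mul_right (hab.pow_right n)

lemma commute_cfcHom_real {A : Type*} [CStarAlgebra A] {a b : A}
    (ha : IsSelfAdjoint a) (hab : Commute b a) (g : C(spectrum ℝ a, ℝ)) :
    Commute b (cfcHom ha g) := by
  have hmem : g ∈ closure (polynomialFunctions (spectrum ℝ a) : Set C(spectrum ℝ a, ℝ)) := by
    have := polynomialFunctions.topologicalClosure (spectrum ℝ a)
    rw [← Subalgebra.topologicalClosure_coe, this]
    trivial
  have hclosed : IsClosed {x : A | Commute b x} := by
    have : {x : A | Commute b x} = (fun x : A => b * x - x * b) ⁻¹' {0} := by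
      ext x; simp [Commute, SemiconjBy, sub_eq_zero]
    rw [this]
    exact isClosed_singleton.preimage (by fun_prop)
  have hT : IsClosed {g : C(spectrum ℝ a, ℝ) | Commute b (cfcHom ha g)} :=
    hclosed.preimage (cfcHom_isClosedEmbedding ha).continuous
  refine hT.closure_subset_iff.mpr ?_ hmem
  intro g hg
  rw [SetLike.mem_coe, polynomialFunctions, Subalgebra.mem_map] at hg
  obtain ⟨p, -, rfl⟩ := hg
  have key : (cfcHom ha (R := ℝ) : C(spectrum ℝ a, ℝ) →⋆ₐ[ℝ] A).toAlgHom.comp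
      (Polynomial.toContinuousMapOnAlgHom (spectrum ℝ a)) = Polynomial.aeval a := by
    apply Polynomial.algHom_ext
    simp only [AlgHom.coe_comp, Function.comp_apply, Polynomial.aeval_X]
    show (cfcHom ha : C(spectrum ℝ a, ℝ) →⋆ₐ[ℝ] A)
      ((Polynomial.toContinuousMapOnAlgHom (spectrum ℝ a)) Polynomial.X) = a
    rw [Polynomial.toContinuousMapOnAlgHom_apply,
      Polynomial.toContinuousMapOn_X_eq_restrict_id, cfcHom_id ha]
  have heq : cfcHom ha ((Polynomial.toContinuousMapOnAlgHom (spectrum ℝ a)) p)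
      = Polynomial.aeval a p := congrFun (congrArg DFunLike.coe key) p
  simp only [Set.mem_setOf_eq]
  rw [heq]
  exact commute_aeval' hab p

lemma commute_cfc_real {A : Type*} [CStarAlgebra A] {a b : A}
    (hab : Commute b a) (f : ℝ → ℝ) : Commute b (cfc f a) := by
  refine cfc_cases (fun x => Commute b x) a f (Commute.zero_right b) fun hf ha => ?_
  exact commute_cfcHom_real ha hab _

theorem stmt_19 (H : Type*) [NormedAddCommGroup H] [InnerProductSpace ℂ H] [CompleteSpace H]
    (P Q : H →L[ℂ] H)
    (hP : IsIdempotentElem P) (hP' : IsSelfAdjoint P)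
    (hQ : IsIdempotentElem Q) (hQ' : IsSelfAdjoint Q)
    (h : ‖P - Q‖ < 1) :
    Nonempty ((LinearMap.range (P : H →ₗ[ℂ] H)) ≃ₗᵢ[ℂ] (LinearMap.range (Q : H →ₗ[ℂ] H))) := by
  -- auxiliary multiplication facts
  have hPP : ∀ x : H →L[ℂ] H, P * (P * x) = P * x := fun x => by rw [← mul_assoc, hP.eq]
  have hQQ : ∀ x : H →L[ℂ] H, Q * (Q * x) = Q * x := fun x => by rw [← mul_assoc, hQ.eq]
  set A : H →L[ℂ] H := Q * P + (1 - Q) * (1 - P) with hAdef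
  set D : H →L[ℂ] H := 1 - (P - Q) ^ 2 with hDdef
  have hAstar : star A = P * Q + (1 - P) * (1 - Q) := by
    simp [hAdef, star_mul, hP'.star_eq, hQ'.star_eq]
  have hD1 : star A * A = D := by
    rw [hAstar, hAdef, hDdef]
    simp only [mul_add, add_mul, mul_sub, sub_mul, mul_one, one_mul, pow_two]
    simp only [mul_assoc, hP.eq, hQ.eq, hPP, hQQ]
    noncomm_ring [hP.eq, hQ.eq, hPP, hQQ]
  have hD2 : A * star A = D := by
    rw [hAstar, hAdef, hDdef]
    simp only [mul_add, add_mul, mul_sub, sub_mul, mul_one, one_mul, pow_two]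
    simp only [mul_assoc, hP.eq, hQ.eq, hPP, hQQ]
    noncomm_ring [hP.eq, hQ.eq, hPP, hQQ]
  have hint : A * P = Q * A := by
    rw [hAdef]
    simp only [mul_add, add_mul, mul_sub, sub_mul, mul_one, one_mul]
    simp only [mul_assoc, hP.eq, hQ.eq, hPP, hQQ]
    noncomm_ring [hP.eq, hQ.eq, hPP, hQQ]
  have hPD : Commute P D := by
    rw [hDdef]
    simp only [Commute, SemiconjBy]
    simp only [mul_sub, sub_mul, mul_one, one_mul, pow_two, mul_add, add_mul]
    simp only [mul_assoc, hP.eq, hQ.eq, hPP, hQQ]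
    noncomm_ring [hP.eq, hQ.eq, hPP, hQQ]
  have hQD : Commute Q D := by
    rw [hDdef]
    simp only [Commute, SemiconjBy]
    simp only [mul_sub, sub_mul, mul_one, one_mul, pow_two, mul_add, add_mul]
    simp only [mul_assoc, hP.eq, hQ.eq, hPP, hQQ]
    noncomm_ring [hP.eq, hQ.eq, hPP, hQQ]
  have hAD : Commute A D := by
    rw [← hD1]; rw [Commute, SemiconjBy, ← mul_assoc, hD2, hD1]
  -- positivity of D
  have hPQsa : IsSelfAdjoint (P - Q) := hP'.sub hQ'
  have hbound : ∀ x : H, ‖(P - Q) x‖ ≤ ‖x‖ := fun x =>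
    le_trans ((P - Q).le_opNorm x) (by
      nlinarith [norm_nonneg x, norm_nonneg (P - Q), (P - Q).le_opNorm x])
  have hDpos' : D.IsPositive := by
    constructor
    · rw [hDdef]
      have h1 : IsSelfAdjoint (1 : H →L[ℂ] H) := by
        rw [IsSelfAdjoint]; exact star_one _
      exact ContinuousLinearMap.isSelfAdjoint_iff_isSymmetric.mp (h1.sub (hPQsa.pow 2))
    · intro x
      have hsym := ContinuousLinearMap.isSelfAdjoint_iff_isSymmetric.mp hPQsa
      have hDx : D x = x - (P - Q) ((P - Q) x) := by
        rw [hDdef]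
        simp [pow_two, ContinuousLinearMap.mul_apply]
      rw [ContinuousLinearMap.reApplyInnerSelf_apply, hDx, inner_sub_left]
      have hadj : (inner ℂ ((P - Q) ((P - Q) x)) x : ℂ) = inner ℂ ((P - Q) x) ((P - Q) x) :=
        hsym ((P - Q) x) x
      rw [hadj]
      rw [map_sub]
      rw [inner_self_eq_norm_sq (𝕜 := ℂ), inner_self_eq_norm_sq (𝕜 := ℂ)]
      have := hbound x
      nlinarith [norm_nonneg ((P - Q) x), norm_nonneg x]
  have hDpos : (0 : H →L[ℂ] H) ≤ D := (ContinuousLinearMap.nonneg_iff_isPositive D).mpr hDpos'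
  have hDsa : IsSelfAdjoint D := hDpos'.isSelfAdjoint
  -- D is invertible
  have hnorm2 : ‖(P - Q) ^ 2‖ < 1 := by
    have h0 : (0:ℝ) ≤ ‖P - Q‖ := norm_nonneg _
    calc ‖(P - Q) ^ 2‖ ≤ ‖P - Q‖ * ‖P - Q‖ := by rw [pow_two]; exact norm_mul_le _ _
      _ < 1 := by nlinarith
  let u : (H →L[ℂ] H)ˣ := Units.oneSub ((P - Q) ^ 2) hnorm2
  have hu : (u : H →L[ℂ] H) = D := rfl
  -- square root of D
  set E : H →L[ℂ] H := cfc Real.sqrt D with hEdef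
  have hE2 : E * E = D := by
    rw [hEdef, ← cfc_mul Real.sqrt Real.sqrt D]
    have : (spectrum ℝ D).EqOn (fun x => Real.sqrt x * Real.sqrt x) id := fun x hx =>
      Real.mul_self_sqrt (spectrum_nonneg_of_nonneg hDpos hx)
    rw [cfc_congr this, cfc_id ℝ D hDsa]
  have hEsa : IsSelfAdjoint E := cfc_predicate Real.sqrt D
  -- commutation facts
  have hPE : Commute P E := commute_cfc_real hPD Real.sqrt
  have hQE : Commute Q E := commute_cfc_real hQD Real.sqrt
  have hAE : Commute A E := commute_cfc_real hAD Real.sqrt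
  have hDE : Commute E D := (commute_cfc_real (Commute.refl D) Real.sqrt).symm
  have hEu : Commute E ↑u⁻¹ := Commute.units_inv_right (by rw [hu]; exact hDE)
  have hPu : Commute P ↑u⁻¹ := Commute.units_inv_right (by rw [hu]; exact hPD)
  have hAu : Commute A ↑u⁻¹ := Commute.units_inv_right (by rw [hu]; exact hAD)
  set R : H →L[ℂ] H := E * ↑u⁻¹ with hRdef
  have hER : E * R = 1 := by rw [hRdef, ← mul_assoc, hE2, ← hu, u.mul_inv]
  have hRE : R * E = 1 := by rw [hRdef, mul_assoc, ← hEu.eq, ← mul_assoc, hE2, ← hu, u.mul_inv]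
  have hsu : star (↑u⁻¹ : H →L[ℂ] H) = ↑u⁻¹ := by
    have h1 : star (↑u⁻¹ : H →L[ℂ] H) * ↑u = 1 := by
      rw [show ((u : H →L[ℂ] H)) = star ↑u by rw [hu, hDsa.star_eq], ← star_mul,
        u.mul_inv, star_one]
    calc star (↑u⁻¹ : H →L[ℂ] H) = star ↑u⁻¹ * (↑u * ↑u⁻¹) := by rw [u.mul_inv, mul_one]
      _ = (star ↑u⁻¹ * ↑u) * ↑u⁻¹ := by rw [mul_assoc]
      _ = ↑u⁻¹ := by rw [h1, one_mul]
  have hRsa : star R = R := by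
    rw [hRdef, star_mul, hsu, hEsa.star_eq]; exact (hEu.symm).eq
  have hRD : R * D * R = 1 := by
    have h1 : R * D * R = (R * E) * (E * R) := by rw [← hE2]; noncomm_ring
    rw [h1, hRE, hER, one_mul]
  have hRR : R * R = ↑u⁻¹ := by
    calc R * R = E * (↑u⁻¹ * E) * ↑u⁻¹ := by rw [hRdef]; noncomm_ring
      _ = E * (E * ↑u⁻¹) * ↑u⁻¹ := by rw [hEu.eq]
      _ = (E * E) * ↑u⁻¹ * ↑u⁻¹ := by noncomm_ring
      _ = ↑u⁻¹ := by rw [hE2, ← hu, u.mul_inv, one_mul]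
  set U : H →L[ℂ] H := A * R with hUdef
  have hU1 : star U * U = 1 := by
    rw [hUdef, star_mul, hRsa]
    have : R * star A * (A * R) = R * (star A * A) * R := by noncomm_ring
    rw [this, hD1, hRD]
  have hU2 : U * star U = 1 := by
    rw [hUdef, star_mul, hRsa]
    have : A * R * (R * star A) = A * (R * R) * star A := by noncomm_ring
    rw [this, hRR, hAu.eq, mul_assoc, hD2, ← hu, u.inv_mul]
  have hPR : Commute P R := hPE.mul_right hPu
  have hUP : U * P = Q * U := by
    calc U * P = A * (R * P) := by rw [hUdef]; noncomm_ring
      _ = A * (P * R) := by rw [← hPR.eq]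
      _ = (A * P) * R := by rw [mul_assoc]
      _ = Q * U := by rw [hint, hUdef, mul_assoc]
  have hPU : P * star U = star U * Q := by
    simpa [star_mul, hP'.star_eq, hQ'.star_eq] using congrArg star hUP
  -- pointwise facts
  have hPfix : ∀ x : H, x ∈ LinearMap.range (P : H →ₗ[ℂ] H) → P x = x := by
    rintro x ⟨y, rfl⟩
    show P (P y) = P y
    rw [← ContinuousLinearMap.mul_apply, hP.eq]
  have hQfix : ∀ x : H, x ∈ LinearMap.range (Q : H →ₗ[ℂ] H) → Q x = x := by
    rintro x ⟨y, rfl⟩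
    show Q (Q y) = Q y
    rw [← ContinuousLinearMap.mul_apply, hQ.eq]
  have hUmem : ∀ x : H, x ∈ LinearMap.range (P : H →ₗ[ℂ] H) → U x ∈ LinearMap.range (Q : H →ₗ[ℂ] H) := by
    intro x hx
    refine ⟨U x, ?_⟩
    show Q (U x) = U x
    conv_rhs => rw [← hPfix x hx]
    rw [← ContinuousLinearMap.mul_apply, ← ContinuousLinearMap.mul_apply U P x, hUP]
  have hVmem : ∀ y : H, y ∈ LinearMap.range (Q : H →ₗ[ℂ] H) → star U y ∈ LinearMap.range (P : H →ₗ[ℂ] H) := by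
    intro y hy
    refine ⟨star U y, ?_⟩
    show P (star U y) = star U y
    conv_rhs => rw [← hQfix y hy]
    rw [← ContinuousLinearMap.mul_apply, ← ContinuousLinearMap.mul_apply (star U) Q y, hPU]
  have hnormU : ∀ x : H, ‖U x‖ = ‖x‖ := by
    intro x
    have h1 : (inner ℂ (U x) (U x) : ℂ) = inner ℂ x x := by
      rw [← ContinuousLinearMap.adjoint_inner_left, ← ContinuousLinearMap.star_eq_adjoint,
        ← ContinuousLinearMap.mul_apply, hU1, ContinuousLinearMap.one_apply]
    have h2 : ‖U x‖ ^ 2 = ‖x‖ ^ 2 := by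
      rw [← inner_self_eq_norm_sq (𝕜 := ℂ), ← inner_self_eq_norm_sq (𝕜 := ℂ), h1]
    nlinarith [norm_nonneg (U x), norm_nonneg x]
  -- build the equivalence
  refine ⟨{ toFun := fun x => ⟨U x, hUmem x x.2⟩
            map_add' := fun x y => by ext; simp
            map_smul' := fun c x => by ext; simp
            invFun := fun y => ⟨star U y, hVmem y y.2⟩
            left_inv := fun x => by
              ext
              show star U (U x) = x
              rw [← ContinuousLinearMap.mul_apply, hU1, ContinuousLinearMap.one_apply]
            right_inv := fun y => by
              ext
              show U (star U y) = y
              rw [← ContinuousLinearMap.mul_apply, hU2, ContinuousLinearMap.one_apply]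
            norm_map' := fun x => hnormU x }⟩
end
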